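/- Let L ≥ 1 be a positive integer, let I, T, N be positive reals, let σ_{y1},…,σ_{yL} be positive reals with Λhalf = diag(σ_{y1},…,σ_{yL}), and let λ2, λ3, τ2, τ3, C1, C2 be reals satisfying λ2 − τ2 ≠ 0, λ3 − τ3 ≠ 0, λ2 + (L−1)τ2 ≠ 0, λ3 + (L−1)τ3 ≠ 0, C1(λ3 − τ3) − C2(λ2 − τ2) ≠ 0, and C1(λ3 + (L−1)τ3) − C2(λ2 + (L−1)τ2) ≠ 0. Then the L×L matrix Ω = (I·T/N)·Λhalf·[C1·((λ2 − τ2)·I_L + τ2·J_L)^{-1} − C2·((λ3 − τ3)·I_L + τ3·J_L)^{-1}]^{-1}·Λhalf is well defined, and for every l ∈ {1,…,L} its l-th diagonal entry equals ((I·T/N)·σ_{yl}² / [C1(λ3 − τ3) − C2(λ2 − τ2)]) · ([C1·λ2·(λ3 − τ3)·(λ3 + (L−1)τ3) − C2·λ3·(λ2 − τ2)·(λ2 + (L−1)τ2)] / [C1(λ3 + (L−1)τ3) − C2(λ2 + (L−1)τ2)]). -/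

import Mathlib

open Matrix

/-- The u×u all-ones matrix over ℝ. -/
def allOnes (u : ℕ) : Matrix (Fin u) (Fin u) ℝ := Matrix.of fun _ _ => 1


lemma allOnes_mul_allOnes (L : ℕ) : allOnes L * allOnes L = (L:ℝ) • allOnes L := by
  ext i j; simp [allOnes, Matrix.mul_apply]

lemma Mmul (L : ℕ) (a b a' b' : ℝ) :
    (a • (1 : Matrix (Fin L) (Fin L) ℝ) + b • allOnes L) * (a' • 1 + b' • allOnes L) =
    (a*a') • 1 + (a*b' + b*a' + (L:ℝ)*(b*b')) • allOnes L := by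
  simp only [add_mul, mul_add, Matrix.smul_mul, Matrix.mul_smul, allOnes_mul_allOnes,
    one_mul, mul_one, smul_smul]
  module

lemma Mmul_one (L : ℕ) (a b : ℝ) (ha : a ≠ 0) (hs : a + (L:ℝ)*b ≠ 0) :
    (a • (1 : Matrix (Fin L) (Fin L) ℝ) + b • allOnes L) *
      ((1/a) • 1 + (-b/(a*(a+(L:ℝ)*b))) • allOnes L) = 1 := by
  rw [Mmul]
  have e1 : a * (1/a) = 1 := by field_simp
  have e2 : a * (-b/(a*(a+(L:ℝ)*b))) + b * (1/a) + (L:ℝ)*(b*(-b/(a*(a+(L:ℝ)*b)))) = 0 := by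
    have hX : a + b * (L:ℝ) ≠ 0 := by rwa [mul_comm] at hs
    field_simp
    ring
  rw [e1, e2]
  simp

lemma Minv (L : ℕ) (a b : ℝ) (ha : a ≠ 0) (hs : a + (L:ℝ)*b ≠ 0) :
    (a • (1 : Matrix (Fin L) (Fin L) ℝ) + b • allOnes L)⁻¹ =
      (1/a) • 1 + (-b/(a*(a+(L:ℝ)*b))) • allOnes L :=
  Matrix.inv_eq_right_inv (Mmul_one L a b ha hs)

/-- analytical form of Theorem 1: under common ICC values across endpoints,
the covariance matrix Ω of the treatment effect estimators is well defined (all matrices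
being inverted are invertible) and its l-th diagonal entry has the stated closed form. -/
theorem diag_entry_common_icc
    (L : ℕ) (hL : 1 ≤ L) (I T N : ℝ) (hI : 0 < I) (hT : 0 < T) (hN : 0 < N)
    (σ : Fin L → ℝ) (hσ : ∀ l, 0 < σ l)
    (lam2 lam3 tau2 tau3 C1 C2 : ℝ)
    (h1 : lam2 - tau2 ≠ 0) (h2 : lam3 - tau3 ≠ 0)
    (h3 : lam2 + ((L : ℝ) - 1) * tau2 ≠ 0) (h4 : lam3 + ((L : ℝ) - 1) * tau3 ≠ 0)
    (h5 : C1 * (lam3 - tau3) - C2 * (lam2 - tau2) ≠ 0)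
    (h6 : C1 * (lam3 + ((L : ℝ) - 1) * tau3) - C2 * (lam2 + ((L : ℝ) - 1) * tau2) ≠ 0) :
    IsUnit ((lam2 - tau2) • (1 : Matrix (Fin L) (Fin L) ℝ) + tau2 • allOnes L) ∧
    IsUnit ((lam3 - tau3) • (1 : Matrix (Fin L) (Fin L) ℝ) + tau3 • allOnes L) ∧
    IsUnit (C1 • ((lam2 - tau2) • (1 : Matrix (Fin L) (Fin L) ℝ) + tau2 • allOnes L)⁻¹ -
            C2 • ((lam3 - tau3) • (1 : Matrix (Fin L) (Fin L) ℝ) + tau3 • allOnes L)⁻¹) ∧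
    ∀ l : Fin L,
      ((I * T / N) •
        (Matrix.diagonal σ *
          (C1 • ((lam2 - tau2) • (1 : Matrix (Fin L) (Fin L) ℝ) + tau2 • allOnes L)⁻¹ -
           C2 • ((lam3 - tau3) • (1 : Matrix (Fin L) (Fin L) ℝ) + tau3 • allOnes L)⁻¹)⁻¹ *
          Matrix.diagonal σ)) l l =
      (I * T / N * (σ l) ^ 2 / (C1 * (lam3 - tau3) - C2 * (lam2 - tau2))) *
        ((C1 * lam2 * (lam3 - tau3) * (lam3 + ((L : ℝ) - 1) * tau3) -
          C2 * lam3 * (lam2 - tau2) * (lam2 + ((L : ℝ) - 1) * tau2)) /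
         (C1 * (lam3 + ((L : ℝ) - 1) * tau3) - C2 * (lam2 + ((L : ℝ) - 1) * tau2))) := by
  set d2 := lam2 - tau2 with hd2
  set d3 := lam3 - tau3 with hd3
  have hs2 : d2 + (L:ℝ)*tau2 = lam2 + ((L:ℝ)-1)*tau2 := by rw [hd2]; ring
  have hs3 : d3 + (L:ℝ)*tau3 = lam3 + ((L:ℝ)-1)*tau3 := by rw [hd3]; ring
  have hs2' : d2 + (L:ℝ)*tau2 ≠ 0 := by rw [hs2]; exact h3
  have hs3' : d3 + (L:ℝ)*tau3 ≠ 0 := by rw [hs3]; exact h4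
  have hM2 := Minv L d2 tau2 h1 hs2'
  have hM3 := Minv L d3 tau3 h2 hs3'
  refine ⟨(Matrix.isUnit_iff_isUnit_det _).mpr (Matrix.isUnit_det_of_right_inverse (Mmul_one L d2 tau2 h1 hs2')),
    (Matrix.isUnit_iff_isUnit_det _).mpr (Matrix.isUnit_det_of_right_inverse (Mmul_one L d3 tau3 h2 hs3')), ?_⟩
  -- the middle matrix in I·L + J·L form
  set s2 := lam2 + ((L:ℝ)-1)*tau2 with hS2
  set s3 := lam3 + ((L:ℝ)-1)*tau3 with hS3
  set A := C1 * (1/d2) - C2 * (1/d3) with hA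
  set B := C1 * (-tau2/(d2*(d2+(L:ℝ)*tau2))) - C2 * (-tau3/(d3*(d3+(L:ℝ)*tau3))) with hB
  have hX : C1 • ((lam2 - tau2) • (1 : Matrix (Fin L) (Fin L) ℝ) + tau2 • allOnes L)⁻¹ -
            C2 • ((lam3 - tau3) • (1 : Matrix (Fin L) (Fin L) ℝ) + tau3 • allOnes L)⁻¹ =
      A • 1 + B • allOnes L := by
    rw [← hd2, ← hd3, hM2, hM3, hA, hB]
    simp only [smul_add, smul_smul, sub_smul]
    module
  have hAne : A ≠ 0 := by
    have : A = (C1 * d3 - C2 * d2) / (d2 * d3) := by rw [hA]; field_simp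
    rw [this]
    exact div_ne_zero h5 (mul_ne_zero h1 h2)
  have hALB : A + (L:ℝ)*B = (C1 * s3 - C2 * s2) / (s2 * s3) := by
    rw [hA, hB, hs2, hs3, ← hs2, ← hs3]
    field_simp
    ring
  have hALBne : A + (L:ℝ)*B ≠ 0 := by
    rw [hALB]; exact div_ne_zero h6 (mul_ne_zero h3 h4)
  rw [hX]
  refine ⟨(Matrix.isUnit_iff_isUnit_det _).mpr (Matrix.isUnit_det_of_right_inverse (Mmul_one L A B hAne hALBne)), ?_⟩
  intro l
  rw [Minv L A B hAne hALBne]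
  have hentry : ((1/A) • (1 : Matrix (Fin L) (Fin L) ℝ) +
      (-B/(A*(A+(L:ℝ)*B))) • allOnes L) l l = 1/A + (-B/(A*(A+(L:ℝ)*B))) := by
    simp [allOnes, Matrix.one_apply]
  simp only [Matrix.smul_apply, Matrix.mul_diagonal, Matrix.diagonal_mul, smul_eq_mul, hentry]
  -- now pure field arithmetic
  have key : 1/A + (-B/(A*(A+(L:ℝ)*B))) = (A + ((L:ℝ)-1)*B) / (A*(A+(L:ℝ)*B)) := by
    have hX : A + B * (L:ℝ) ≠ 0 := by rwa [mul_comm] at hALBne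
    field_simp
    ring
  have hnum : A + ((L:ℝ)-1)*B = (C1 * lam2 * d3 * s3 - C2 * lam3 * d2 * s2) /
      (d2 * s2 * (d3 * s3)) := by
    have e2 : lam2 = d2 + tau2 := by rw [hd2]; ring
    have e3 : lam3 = d3 + tau3 := by rw [hd3]; ring
    rw [hA, hB, hs2, hs3, e2, e3, ← hs2, ← hs3]
    field_simp
    ring
  have hAfrac : A = (C1 * d3 - C2 * d2) / (d2 * d3) := by rw [hA]; field_simp
  rw [key, hnum, hALB, hAfrac]
  field_simp
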